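/- Let p > k and q > k be integers. Then in the ring C^{(k)}[t] (i.e. modulo the ideal generated by I^{(k)} in ℤ[c,t]) one has ((1−R_{12})/(1+R_{12})) c^{(k+1−p, k+1−q)}_{(p,q)} = − ((1−R_{12})/(1+R_{12})) c^{(k+1−q, k+1−p)}_{(q,p)}, where (1−R_{12})/(1+R_{12}) := (1−R_{12}) Σ_{m≥0} (−R_{12})^m acts on pairs as described. -/

import Mathlib

open scoped Classical

noncomputable section

/-- The polynomial ring ℤ[c,t]: variables `Sum.inl p` (p ≥ 1) are the `c` variables,
variables `Sum.inr i` (i ≥ 1) are the `t` variables. -/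
abbrev P : Type := MvPolynomial (ℕ ⊕ ℕ) ℤ

/-- t_r, with the convention t_r = t_{-r} for r < 0. -/
def tvar (r : ℤ) : P := MvPolynomial.X (Sum.inr r.natAbs)

/-- c_p, with c_0 = 1 and c_p = 0 for p < 0. -/
def cvar (p : ℤ) : P :=
  if p = 0 then 1 else if p < 0 then 0 else MvPolynomial.X (Sum.inl p.toNat)

def negT (i : ℕ) : P := - MvPolynomial.X (Sum.inr i)

/-- e_j(-t_1,…,-t_m). -/
def esymNT (m j : ℕ) : P :=
  ∑ S ∈ Finset.powersetCard j (Finset.Icc 1 m), ∏ i ∈ S, negT i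

/-- h_j(-t_1,…,-t_m). -/
def hsymNT (m j : ℕ) : P :=
  ∑ f ∈ (Finset.Icc 1 m).sym j, (Multiset.map negT (f : Multiset ℕ)).prod

/-- h^r_j(-t): complete homogeneous for r ≥ 0, elementary in |r| variables for r < 0,
and 0 for j < 0. -/
def hNT (r j : ℤ) : P :=
  if j < 0 then 0
  else if 0 ≤ r then hsymNT r.toNat j.toNat
  else esymNT (-r).toNat j.toNat

/-- c^r_p = Σ_{j=0}^p c_{p-j} h^r_j(-t). -/
def cc (r p : ℤ) : P :=
  ∑ j ∈ Finset.range (p.toNat + 1), cvar (p - j) * hNT r j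

/-- c^β_α = Π_i c^{β_i}_{α_i} (sequences are indexed from 1; entry 0 is inert since c^r_0 = 1). -/
def cmon (β α : ℕ → ℤ) : P := ∏ᶠ i, cc (β i) (α i)

/-- The sequence obtained from α by the raising-operator monomial Π_{(i,j)} R_{ij}^{n(i,j)}. -/
def raiseSeq (n : (ℕ × ℕ) →₀ ℕ) (α : ℕ → ℤ) : ℕ → ℤ := fun m =>
  α m + ∑ p ∈ n.support, (n p : ℤ) * ((if p.1 = m then 1 else 0) - (if p.2 = m then 1 else 0))

/-- Coefficient of R^m in the factor attached to one pair: (1-R) if `a` only,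
(1+R)⁻¹ if `b` only, (1-R)(1+R)⁻¹ if both, 1 if neither (only evaluated at m ≥ 1). -/
def pairCoeff (a b : Prop) (m : ℕ) : ℤ :=
  if a then (if b then 2 * (-1 : ℤ)^m else if m ≤ 1 then (-1 : ℤ)^m else 0)
  else (if b then (-1 : ℤ)^m else 0)

def roCoeff (A B : Set (ℕ × ℕ)) (n : (ℕ × ℕ) →₀ ℕ) : ℤ :=
  ∏ p ∈ n.support, pairCoeff (p ∈ A) (p ∈ B) (n p)

/-- Apply the raising operator expression Π_{p∈A}(1-R_p) · Π_{p∈B}(1+R_p)⁻¹ to c^β_α. -/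
def applyRO (A B : Set (ℕ × ℕ)) (β α : ℕ → ℤ) : P :=
  ∑ᶠ n : (ℕ × ℕ) →₀ ℕ, (roCoeff A B n) • cmon β (raiseSeq n α)

/-- The set Δ° of all pairs (i,j) with 1 ≤ i < j. -/
def Upper : Set (ℕ × ℕ) := {p | 1 ≤ p.1 ∧ p.1 < p.2}

/-- A valid set of pairs: a finite order ideal of Δ°. -/
def ValidPairs (D : Set (ℕ × ℕ)) : Prop :=
  D ⊆ Upper ∧ D.Finite ∧
    ∀ p ∈ D, ∀ q ∈ Upper, q.1 ≤ p.1 → q.2 ≤ p.2 → q ∈ D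

/-- a_j(D) = #{i < j : (i,j) ∉ D}. -/
def aD (D : Set (ℕ × ℕ)) (j : ℕ) : ℕ :=
  ((Finset.Ico 1 j).filter (fun i => (i, j) ∉ D)).card

/-- γ_j(D,μ) = k + 1 - μ_j + a_j(D). -/
def gammaSeq (k : ℕ) (D : Set (ℕ × ℕ)) (μ : ℕ → ℤ) (j : ℕ) : ℤ :=
  (k : ℤ) + 1 - μ j + aD D j

/-- T(D,μ) = R^D c^{γ(D,μ)}_μ, where R^D = Π_{i<j}(1-R_{ij}) Π_{(i,j)∈D}(1+R_{ij})⁻¹. -/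
def Tpol (k : ℕ) (D : Set (ℕ × ℕ)) (μ : ℕ → ℤ) : P :=
  applyRO Upper D (gammaSeq k D μ) μ

def FinSupp (α : ℕ → ℤ) : Prop := ∃ N, ∀ m, N ≤ m → α m = 0

/-- Partitions, as integer sequences indexed from 1 (entry 0 is 0). -/
def IsPartition (lam : ℕ → ℤ) : Prop :=
  lam 0 = 0 ∧ (∀ i, 1 ≤ i → 0 ≤ lam i) ∧ (∀ i, 1 ≤ i → lam (i+1) ≤ lam i) ∧ FinSupp lam

/-- k-strict partitions: parts greater than k are distinct. -/
def IsKStrict (k : ℕ) (lam : ℕ → ℤ) : Prop :=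
  IsPartition lam ∧ ∀ i, 1 ≤ i → (k : ℤ) < lam i → lam (i+1) < lam i

/-- C(λ) = {(i,j) : 1 ≤ i < j, λ_i + λ_j > 2k + j - i}. -/
def Cset (k : ℕ) (lam : ℕ → ℤ) : Set (ℕ × ℕ) :=
  {p | 1 ≤ p.1 ∧ p.1 < p.2 ∧ 2*(k:ℤ) + (p.2:ℤ) - (p.1:ℤ) < lam p.1 + lam p.2}

/-- β_j(λ) = k + 1 - λ_j + #{i < j : (i,j) ∉ C(λ)}. -/
def betaSeq (k : ℕ) (lam : ℕ → ℤ) (j : ℕ) : ℤ :=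
  (k : ℤ) + 1 - lam j + ((Finset.Ico 1 j).filter (fun i => (i, j) ∉ Cset k lam)).card

/-- The double theta polynomial Θ_λ(c|t) = R^λ c^{β(λ)}_λ. -/
def Theta (k : ℕ) (lam : ℕ → ℤ) : P :=
  applyRO Upper (Cset k lam) (betaSeq k lam) lam

def zeroSeq : ℕ → ℤ := fun _ => 0

/-- The single theta polynomial Θ_λ(c) = R^λ c_λ. -/
def ThetaSingle (k : ℕ) (lam : ℕ → ℤ) : P :=
  applyRO Upper (Cset k lam) zeroSeq lam

/-- The ideal generated by I^{(k)} in ℤ[c,t]. -/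
def Ik (k : ℕ) : Ideal P :=
  Ideal.span {x | ∃ p : ℕ, k < p ∧
    x = cvar (p:ℤ) * cvar (p:ℤ)
      + 2 * ∑ i ∈ Finset.Icc 1 p, (-1 : P)^i * (cvar ((p : ℤ) + i) * cvar ((p : ℤ) - i))}

/-- ℤ[t] = polynomials in t₁, t₂, …; variable n stands for t_{n+1}. -/
abbrev Zt : Type := MvPolynomial ℕ ℤ

/-- The embedding ℤ[t] → ℤ[c,t]. -/
def tEmbed : Zt →+* P :=
  (MvPolynomial.aeval (fun n : ℕ => (MvPolynomial.X (Sum.inr (n+1)) : P))).toRingHom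

/-- α ↦ α + r·ε_j. -/
def addAt (α : ℕ → ℤ) (j : ℕ) (r : ℤ) : ℕ → ℤ := fun m => α m + if m = j then r else 0

def epsSeq (j : ℕ) : ℕ → ℤ := fun m => if m = j then 1 else 0

/-- The sequence (λ_1,…,λ_{j-1}, r, s, μ_{j+2},…) with prescribed entries r, s at j, j+1. -/
def twoSet (ν : ℕ → ℤ) (j : ℕ) (r s : ℤ) : ℕ → ℤ :=
  fun m => if m = j then r else if m = j+1 then s else ν m

/-- Pairs (i,j) with 1 ≤ i < j ≤ ℓ. -/
def BddPairs (ℓ : ℕ) : Set (ℕ × ℕ) := {p | 1 ≤ p.1 ∧ p.1 < p.2 ∧ p.2 ≤ ℓ}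

/-- Boxes [r,c] and [r',c'] are k-related: |c-k-1| + r = |c'-k-1| + r'. -/
def kRel (k : ℕ) (r c r' c' : ℤ) : Prop :=
  |c - (k:ℤ) - 1| + r = |c' - (k:ℤ) - 1| + r'

/-- Case (i) of λ → μ: μ is obtained from λ by adding a single box (in some row h). -/
def ArrowBox (lam μ : ℕ → ℤ) : Prop :=
  ∃ h : ℕ, 1 ≤ h ∧ ∀ m, μ m = lam m + if m = h then 1 else 0

/-- Case (ii) of λ → μ: remove r boxes from a column c ≤ k of λ (giving ν) and add r+1
boxes to a single row h of ν, so that the removed boxes and the bottom box of μ in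
column c are each k-related to one of the added boxes. -/
def ArrowMove (k : ℕ) (lam μ : ℕ → ℤ) : Prop :=
  ∃ c h r : ℕ, 1 ≤ c ∧ c ≤ k ∧ 1 ≤ h ∧ 1 ≤ r ∧
    ∃ ν : ℕ → ℤ, IsPartition ν ∧
      ∃ S : Finset ℕ, S.card = r ∧
        (∀ x ∈ S, 1 ≤ x ∧ lam x = (c:ℤ) ∧ ν x = (c:ℤ) - 1) ∧
        (∀ x, x ∉ S → ν x = lam x) ∧
        (∀ m, μ m = ν m + if m = h then (r:ℤ) + 1 else 0) ∧
        (∀ x ∈ S, ∃ y : ℤ, ν h + 1 ≤ y ∧ y ≤ ν h + r + 1 ∧ kRel k x c h y) ∧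
        (∀ b : ℕ, 1 ≤ b → (c:ℤ) ≤ μ b → μ (b+1) < (c:ℤ) →
          ∃ y : ℤ, ν h + 1 ≤ y ∧ y ≤ ν h + r + 1 ∧ kRel k b c h y)

/-- λ → μ for k-strict partitions. -/
def ChevArrow (k : ℕ) (lam μ : ℕ → ℤ) : Prop :=
  IsKStrict k μ ∧ (ArrowBox lam μ ∨ ArrowMove k lam μ)

/-- The Chevalley coefficient e_{λμ}: 2 iff μ ⊃ λ with added box neither in column k+1
nor k-related to a bottom box in one of the first k columns of λ; 1 otherwise. -/
def eCoeff (k : ℕ) (lam μ : ℕ → ℤ) : ℤ :=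
  if ∃ h : ℕ, 1 ≤ h ∧ (∀ m, μ m = lam m + if m = h then 1 else 0) ∧
      lam h + 1 ≠ (k:ℤ) + 1 ∧
      ¬ ∃ c x : ℕ, 1 ≤ c ∧ c ≤ k ∧ 1 ≤ x ∧ (c:ℤ) ≤ lam x ∧ lam (x+1) < (c:ℤ) ∧
          kRel k x c h (lam h + 1)
  then 2 else 1

/-- Correspondence between k-strict partitions contained in the (n-k)×(n+k) rectangle and
k-Grassmannian elements of W_n (one-line notation w : ℕ → ℤ on indices 1..n). -/
def GrassCorrespond (k n : ℕ) (w : ℕ → ℤ) (lam : ℕ → ℤ) : Prop :=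
  (∀ m, 1 ≤ m → m ≤ n → 1 ≤ (w m).natAbs ∧ (w m).natAbs ≤ n) ∧
  (∀ m m', 1 ≤ m → m ≤ n → 1 ≤ m' → m' ≤ n → (w m).natAbs = (w m').natAbs → m = m') ∧
  (∀ m, 1 ≤ m → m ≤ k → 0 < w m) ∧
  (∀ m, 1 ≤ m → m + 1 ≤ k → w m < w (m+1)) ∧
  (∀ m, k + 1 ≤ m → m + 1 ≤ n → w m < w (m+1)) ∧
  (∀ i, 1 ≤ i → k + i ≤ n →
    (w (k+i) < 0 → lam i = (k:ℤ) + ((w (k+i)).natAbs : ℤ)) ∧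
    (0 < w (k+i) → lam i = (((Finset.Icc 1 k).filter (fun p => w (k+i) < w p)).card : ℤ))) ∧
  (∀ i, n - k < i → lam i = 0)

/-- The simple reflection s_i acting on the values ±1, …, ±n of signed permutations. -/
def sRefl (i : ℕ) (x : ℤ) : ℤ :=
  if i = 0 then (if x = 1 then -1 else if x = -1 then 1 else x)
  else if x = (i:ℤ) then (i:ℤ)+1
  else if x = (i:ℤ)+1 then (i:ℤ)
  else if x = -(i:ℤ) then -((i:ℤ)+1)
  else if x = -((i:ℤ)+1) then -(i:ℤ)
  else x

/-- Images of the variables under the automorphism s_i of ℤ[c,t]. -/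
def sImage (i : ℕ) : (ℕ ⊕ ℕ) → P
  | Sum.inl p =>
      if i = 0 then
        (if p = 0 then MvPolynomial.X (Sum.inl 0) else
          cvar (p:ℤ) + 2 * ∑ j ∈ Finset.Icc 1 p, (negT 1)^j * cvar ((p:ℤ) - (j:ℤ)))
      else MvPolynomial.X (Sum.inl p)
  | Sum.inr m =>
      if i = 0 then (if m = 1 then negT 1 else MvPolynomial.X (Sum.inr m))
      else if m = i then MvPolynomial.X (Sum.inr (i+1))
      else if m = i+1 then MvPolynomial.X (Sum.inr i)
      else MvPolynomial.X (Sum.inr m)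

/-- The ring endomorphism s_i of ℤ[c,t]. -/
def sAut (i : ℕ) : P →+* P := (MvPolynomial.aeval (sImage i)).toRingHom

/-- Denominator of the divided difference ∂_i: 2t₁ for i = 0, t_{i+1} - t_i for i ≥ 1. -/
def dden (i : ℕ) : P :=
  if i = 0 then 2 * MvPolynomial.X (Sum.inr 1)
  else MvPolynomial.X (Sum.inr (i+1)) - MvPolynomial.X (Sum.inr i)

/-- The divided difference operator ∂_i: the (unique, since P is a domain) quotient
(f - s_i f)/(denominator) whenever the division is exact. -/
def ddiff (i : ℕ) (f : P) : P :=
  if h : ∃ g : P, f - sAut i f = dden i * g then h.choose else 0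

section Aux

lemma cvar_neg {x : ℤ} (h : x < 0) : cvar x = 0 := by
  simp [cvar, h, h.ne]

lemma cvar_zero' : cvar 0 = 1 := by simp [cvar]

lemma hNT_zero (r : ℤ) : hNT r 0 = 1 := by
  unfold hNT
  split
  · omega
  split
  · simp [hsymNT, Finset.sym_zero]
    rfl
  · simp [esymNT]

lemma cc_neg {r x : ℤ} (h : x < 0) : cc r x = 0 := by
  have : x.toNat = 0 := by omega
  simp [cc, this, cvar_neg h]

lemma cc_zero (r : ℤ) : cc r 0 = 1 := by
  simp [cc, cvar_zero', hNT_zero]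

lemma hNT_high (d : ℕ) {j : ℕ} (h : d < j) : hNT (-(d:ℤ)) (j:ℤ) = 0 := by
  unfold hNT
  have hj : ¬ ((j:ℤ) < 0) := by omega
  rw [if_neg hj]
  rcases Nat.eq_zero_or_pos d with hd | hd
  · subst hd
    rw [if_pos (by omega)]
    obtain ⟨j', rfl⟩ : ∃ j', j = j' + 1 := ⟨j - 1, by omega⟩
    simp [hsymNT, Finset.Icc_eq_empty (by omega : ¬ (1:ℕ) ≤ 0)]
  · rw [if_neg (by omega)]
    simp only [esymNT, neg_neg, Int.toNat_natCast]
    rw [Finset.powersetCard_eq_empty.mpr (by rw [Nat.card_Icc]; omega), Finset.sum_empty]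

end Aux
section Ser
open PowerSeries Finset

def CPser : PowerSeries P := PowerSeries.mk fun n => (-1)^n * cvar n
def CP0ser : PowerSeries P := PowerSeries.mk fun n => cvar n
def EPser (d : ℕ) : PowerSeries P := PowerSeries.mk fun j => (-1)^j * hNT (-(d:ℤ)) j
def FPser (d : ℕ) : PowerSeries P := PowerSeries.mk fun j => hNT (-(d:ℤ)) j

lemma coeff_CE (d n : ℕ) :
    (PowerSeries.coeff n) (CPser * EPser d) = (-1)^n * cc (-(d:ℤ)) n := by
  rw [show CPser * EPser d = EPser d * CPser from mul_comm _ _, PowerSeries.coeff_mul]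
  rw [Finset.Nat.sum_antidiagonal_eq_sum_range_succ_mk]
  have hcc : cc (-(d:ℤ)) (n:ℤ) =
      ∑ j ∈ Finset.range (n+1), cvar ((n:ℤ) - j) * hNT (-(d:ℤ)) j := by
    rw [cc]; simp
  rw [hcc, Finset.mul_sum]
  refine Finset.sum_congr rfl fun j hj => ?_
  have hjn : j ≤ n := by simpa [Nat.lt_succ_iff] using hj
  simp only [CPser, EPser, PowerSeries.coeff_mk]
  have h1 : ((n - j : ℕ) : ℤ) = (n:ℤ) - j := by omega
  have h2 : (-1 : P)^j * (-1 : P)^(n-j) = (-1)^n := by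
    rw [← pow_add]; congr 1; omega
  rw [h1]; ring_nf
  rw [mul_assoc, h2]

lemma coeff_CF (d n : ℕ) :
    (PowerSeries.coeff n) (CP0ser * FPser d) = cc (-(d:ℤ)) n := by
  rw [show CP0ser * FPser d = FPser d * CP0ser from mul_comm _ _, PowerSeries.coeff_mul]
  rw [Finset.Nat.sum_antidiagonal_eq_sum_range_succ_mk]
  have hcc : cc (-(d:ℤ)) (n:ℤ) =
      ∑ j ∈ Finset.range (n+1), cvar ((n:ℤ) - j) * hNT (-(d:ℤ)) j := by
    rw [cc]; simp
  rw [hcc]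
  refine Finset.sum_congr rfl fun j hj => ?_
  have hjn : j ≤ n := by simpa [Nat.lt_succ_iff] using hj
  simp only [CP0ser, FPser, PowerSeries.coeff_mk]
  have h1 : ((n - j : ℕ) : ℤ) = (n:ℤ) - j := by omega
  rw [h1, mul_comm]

lemma coeff_EF (da db : ℕ) {n : ℕ} (h : da + db < n) :
    (PowerSeries.coeff n) (EPser da * FPser db) = 0 := by
  rw [PowerSeries.coeff_mul]
  refine Finset.sum_eq_zero fun ij hij => ?_
  rw [Finset.HasAntidiagonal.mem_antidiagonal] at hij
  simp only [EPser, FPser, PowerSeries.coeff_mk]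
  rcases lt_or_ge da ij.1 with h1 | h1
  · rw [hNT_high da h1]; ring
  · rw [hNT_high db (by omega)]; ring

end Ser
section DD
open PowerSeries Finset

lemma coeff_CC (M : ℕ) :
    (PowerSeries.coeff M) (CPser * CP0ser)
      = ∑ i ∈ Finset.range (M+1), (-1)^i * (cvar i * cvar ((M:ℤ) - i)) := by
  rw [PowerSeries.coeff_mul, Finset.Nat.sum_antidiagonal_eq_sum_range_succ_mk]
  refine Finset.sum_congr rfl fun i hi => ?_
  have hiM : i ≤ M := by simpa [Nat.lt_succ_iff] using hi
  simp only [CPser, CP0ser, PowerSeries.coeff_mk]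
  rw [show ((M - i : ℕ):ℤ) = (M:ℤ) - i by omega]; ring

lemma D_odd {M : ℕ} (h : Odd M) :
    ∑ i ∈ Finset.range (M+1), ((-1:P))^i * (cvar i * cvar ((M:ℤ) - i)) = 0 := by
  set f : ℕ → P := fun i => (-1)^i * (cvar i * cvar ((M:ℤ) - i)) with hf
  have hrefl : ∑ j ∈ Finset.range (M+1), f (M - j) = ∑ j ∈ Finset.range (M+1), f j := by
    have := Finset.sum_range_reflect f (M+1)
    simpa using this
  have heq : ∀ j ∈ Finset.range (M+1), f (M - j) = - f j := by
    intro j hj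
    have hjM : j ≤ M := by simpa [Nat.lt_succ_iff] using hj
    have h1 : ((M - j : ℕ):ℤ) = (M:ℤ) - j := by omega
    have h2 : ((-1:P))^(M-j) = -(-1)^j := by
      have hMj : M + j = (M - j) + 2*j := by omega
      have : ((-1:P))^(M+j) = ((-1:P))^(M-j) := by
        rw [hMj, pow_add, pow_mul]; simp
      rw [← this, pow_add, h.neg_one_pow]; ring
    simp only [hf, h1, h2]
    rw [show (M:ℤ) - ((M:ℤ) - j) = (j:ℤ) by ring]; ring
  rw [Finset.sum_congr rfl heq, Finset.sum_neg_distrib] at hrefl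
  exact CharZero.neg_eq_self_iff.mp hrefl

lemma D_even_mem (k s : ℕ) (hs : k < s) :
    ∑ i ∈ Finset.range (2*s+1), ((-1:P))^i * (cvar i * cvar (((2*s : ℕ):ℤ) - i)) ∈ Ik k := by
  set f : ℕ → P := fun i => (-1)^i * (cvar i * cvar (((2*s : ℕ):ℤ) - i)) with hf
  set g : P := cvar (s:ℤ) * cvar (s:ℤ)
      + 2 * ∑ i ∈ Finset.Icc 1 s, (-1)^i * (cvar ((s:ℤ) + i) * cvar ((s:ℤ) - i)) with hgdef
  have hg : g ∈ Ik k := Ideal.subset_span ⟨s, hs, rfl⟩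
  have split : ∑ i ∈ Finset.range (2*s+1), f i
      = ∑ i ∈ Finset.range (s+1), f i + ∑ i ∈ Finset.Ico (s+1) (2*s+1), f i := by
    simp only [Finset.range_eq_Ico]
    exact (Finset.sum_Ico_consecutive f (by omega : 0 ≤ s+1) (by omega : s+1 ≤ 2*s+1)).symm
  have h2 : ∑ i ∈ Finset.Ico (s+1) (2*s+1), f i = ∑ j ∈ Finset.range s, f (s+1+j) := by
    rw [Finset.sum_Ico_eq_sum_range, show 2*s+1 - (s+1) = s by omega]
  have hsym : ∀ j ∈ Finset.range s, f (s - 1 - j) = f (s+1+j) := by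
    intro j hj
    have hjs : j < s := Finset.mem_range.mp hj
    have c1 : ((s - 1 - j : ℕ):ℤ) = (s:ℤ) - 1 - j := by omega
    have c2 : (((2*s : ℕ)):ℤ) - ((s - 1 - j : ℕ):ℤ) = ((s+1+j : ℕ):ℤ) := by omega
    have c3 : (((2*s : ℕ)):ℤ) - ((s+1+j : ℕ):ℤ) = (s:ℤ) - 1 - j := by omega
    have csign : ((-1:P))^(s+1+j) = ((-1:P))^(s-1-j) := by
      rw [show s+1+j = (s-1-j) + 2*(1+j) by omega, pow_add, pow_mul]; simp
    simp only [hf]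
    rw [c2, c3, c1, csign]; ring
  have h3 : ∑ j ∈ Finset.range s, f (s+1+j) = ∑ j ∈ Finset.range s, f j := by
    rw [← Finset.sum_congr rfl hsym]
    have := Finset.sum_range_reflect f s
    simpa using this
  have hS : ∑ i ∈ Finset.range (2*s+1), f i = f s + 2 * ∑ j ∈ Finset.range s, f (s+1+j) := by
    rw [split, h2, Finset.sum_range_succ, h3]; ring
  have hfs : f s = (-1)^s * (cvar (s:ℤ) * cvar (s:ℤ)) := by
    simp only [hf]
    rw [show (((2*s : ℕ)):ℤ) - (s:ℤ) = (s:ℤ) by push_cast; ring]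
  have htail : ∑ j ∈ Finset.range s, f (s+1+j)
      = (-1:P)^s * ∑ i ∈ Finset.Icc 1 s, (-1)^i * (cvar ((s:ℤ) + i) * cvar ((s:ℤ) - i)) := by
    rw [Finset.mul_sum]
    have : Finset.Icc 1 s = Finset.Ico 1 (s+1) := by
      rw [Finset.Ico_add_one_right_eq_Icc]
    rw [this, Finset.sum_Ico_eq_sum_range, show s+1-1 = s by omega]
    refine Finset.sum_congr rfl fun j hj => ?_
    simp only [hf]
    have e1 : ((s+1+j : ℕ):ℤ) = (s:ℤ) + ((1+j : ℕ):ℤ) := by push_cast; ring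
    have e2 : (((2*s : ℕ)):ℤ) - ((s:ℤ) + ((1+j : ℕ):ℤ)) = (s:ℤ) - ((1+j : ℕ):ℤ) := by push_cast; ring
    have e3 : ((-1:P))^(s+1+j) = (-1:P)^s * (-1:P)^(1+j) := by
      rw [show s+1+j = s + (1+j) by omega, pow_add]
    rw [e1, e2, e3]; ring
  have : ∑ i ∈ Finset.range (2*s+1), f i = (-1:P)^s * g := by
    rw [hS, hfs, htail, hgdef]; ring
  rw [this]
  exact Ideal.mul_mem_left _ _ hg

lemma coeff_CC_mem (k M : ℕ) (h : 2*k+2 ≤ M) :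
    (PowerSeries.coeff M) (CPser * CP0ser) ∈ Ik k := by
  rw [coeff_CC]
  rcases Nat.even_or_odd M with he | ho
  · obtain ⟨s, hs⟩ := he
    have hM : M = 2*s := by omega
    subst hM
    exact D_even_mem k s (by omega)
  · rw [D_odd ho]; exact Ideal.zero_mem _

lemma key_mem (k da db : ℕ) :
    ∑ n ∈ Finset.range (da+db+2*k+2+1),
        ((-1:P))^n * (cc (-(da:ℤ)) n * cc (-(db:ℤ)) (((da+db+2*k+2 : ℕ):ℤ) - n)) ∈ Ik k := by
  set N : ℕ := da+db+2*k+2 with hN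
  have hcoe : ∑ n ∈ Finset.range (N+1),
      ((-1:P))^n * (cc (-(da:ℤ)) n * cc (-(db:ℤ)) ((N:ℤ) - n))
      = (PowerSeries.coeff N) ((CPser * EPser da) * (CP0ser * FPser db)) := by
    rw [PowerSeries.coeff_mul, Finset.Nat.sum_antidiagonal_eq_sum_range_succ_mk]
    refine Finset.sum_congr rfl fun n hn => ?_
    have hnN : n ≤ N := by simpa [Nat.lt_succ_iff] using hn
    rw [coeff_CE, coeff_CF, show ((N - n : ℕ):ℤ) = (N:ℤ) - n by omega]
    ring
  rw [hcoe, show (CPser * EPser da) * (CP0ser * FPser db)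
      = (CPser * CP0ser) * (EPser da * FPser db) by ring]
  rw [PowerSeries.coeff_mul]
  refine Ideal.sum_mem _ fun ij hij => ?_
  rw [Finset.HasAntidiagonal.mem_antidiagonal] at hij
  rcases le_or_gt (2*k+2) ij.1 with h1 | h1
  · exact Ideal.mul_mem_right _ _ (coeff_CC_mem k ij.1 h1)
  · rw [coeff_EF da db (by omega)]
    rw [mul_zero]
    exact Ideal.zero_mem _

end DD
section Red

lemma cmon_two (β α : ℕ → ℤ) (h0 : α 0 = 0) (h3 : ∀ i, 3 ≤ i → α i = 0) :
    cmon β α = cc (β 1) (α 1) * cc (β 2) (α 2) := by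
  rw [cmon]
  have hsub : Function.mulSupport (fun i => cc (β i) (α i)) ⊆ (({1, 2} : Finset ℕ) : Set ℕ) := by
    intro i hi
    simp only [Finset.coe_insert, Finset.coe_singleton, Set.mem_insert_iff, Set.mem_singleton_iff]
    by_contra hcon
    push_neg at hcon
    have hz : α i = 0 := by
      rcases Nat.lt_or_ge i 3 with h | h
      · interval_cases i
        · exact h0
        · exact absurd rfl hcon.1
        · exact absurd rfl hcon.2
      · exact h3 i h
    exact hi (by show cc (β i) (α i) = 1; rw [hz, cc_zero])
  rw [finprod_eq_prod_of_mulSupport_subset _ hsub]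
  rw [Finset.prod_insert (by decide), Finset.prod_singleton]

lemma raiseSeq_single (m : ℕ) (α : ℕ → ℤ) :
    raiseSeq (Finsupp.single ((1:ℕ),(2:ℕ)) m) α
      = fun j => α j + (m:ℤ) * ((if 1 = j then 1 else 0) - (if 2 = j then 1 else 0)) := by
  funext j
  rcases Nat.eq_zero_or_pos m with hm | hm
  · subst hm
    simp [raiseSeq]
  · rw [raiseSeq, Finsupp.support_single_ne_zero _ (by omega), Finset.sum_singleton,
      Finsupp.single_eq_same]

lemma roCoeff_single (m : ℕ) :
    roCoeff {((1:ℕ),(2:ℕ))} {((1:ℕ),(2:ℕ))} (Finsupp.single ((1:ℕ),(2:ℕ)) m)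
      = if m = 0 then 1 else 2*(-1)^m := by
  rcases Nat.eq_zero_or_pos m with hm | hm
  · subst hm
    simp [roCoeff]
  · rw [roCoeff, Finsupp.support_single_ne_zero _ (by omega), Finset.prod_singleton,
      Finsupp.single_eq_same, if_neg (by omega)]
    rw [pairCoeff, if_pos (Set.mem_singleton _), if_pos (Set.mem_singleton _)]

lemma applyRO_pair (β : ℕ → ℤ) (p q : ℤ) (hp : 0 ≤ p) :
    applyRO {((1:ℕ),(2:ℕ))} {((1:ℕ),(2:ℕ))} β (twoSet zeroSeq 1 p q)
      = ∑ m ∈ Finset.range (q.toNat + 1),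
          ((if m = 0 then 1 else 2*(-1)^m : ℤ)) • (cc (β 1) (p + m) * cc (β 2) (q - m)) := by
  set α : ℕ → ℤ := twoSet zeroSeq 1 p q with hα
  have hα1 : α 1 = p := rfl
  have hα2 : α 2 = q := rfl
  have hα0 : α 0 = 0 := rfl
  have hα3 : ∀ i, 3 ≤ i → α i = 0 := by
    intro i hi
    simp only [hα, twoSet, zeroSeq]
    rw [if_neg (by omega), if_neg (by omega)]
  have hterm : ∀ m : ℕ, cmon β (raiseSeq (Finsupp.single ((1:ℕ),(2:ℕ)) m) α)
      = cc (β 1) (p + m) * cc (β 2) (q - m) := by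
    intro m
    rw [raiseSeq_single]
    rw [cmon_two]
    · congr 1
      · rw [show α 1 + (m:ℤ) * ((if 1 = 1 then 1 else 0) - (if 2 = 1 then 1 else 0)) = p + m by
          rw [hα1]; norm_num]
      · rw [show α 2 + (m:ℤ) * ((if 1 = 2 then 1 else 0) - (if 2 = 2 then 1 else 0)) = q - m by
          rw [hα2]; norm_num; ring]
    · rw [hα0]; norm_num
    · intro i hi
      rw [hα3 i hi, if_neg (by omega), if_neg (by omega)]; ring
  set s : Finset ((ℕ × ℕ) →₀ ℕ) :=
    (Finset.range (q.toNat + 1)).image (Finsupp.single ((1:ℕ),(2:ℕ))) with hs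
  have hsupp : Function.support
      (fun n => (roCoeff {((1:ℕ),(2:ℕ))} {((1:ℕ),(2:ℕ))} n) • cmon β (raiseSeq n α))
        ⊆ (s : Set ((ℕ × ℕ) →₀ ℕ)) := by
    intro n hn
    by_contra hns
    apply hn
    show roCoeff {((1:ℕ),(2:ℕ))} {((1:ℕ),(2:ℕ))} n • cmon β (raiseSeq n α) = 0
    by_cases hsub : ∀ x ∈ n.support, x = ((1:ℕ),(2:ℕ))
    · have hn_eq : n = Finsupp.single ((1:ℕ),(2:ℕ)) (n ((1:ℕ),(2:ℕ))) := by
        ext x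
        by_cases hx : x = ((1:ℕ),(2:ℕ))
        · subst hx; rw [Finsupp.single_eq_same]
        · rw [Finsupp.single_eq_of_ne hx]
          by_contra hnx
          exact hx (hsub x (Finsupp.mem_support_iff.mpr hnx))
      set m := n ((1:ℕ),(2:ℕ)) with hm
      have hmq : q.toNat + 1 ≤ m := by
        by_contra hcon
        exact hns (Finset.mem_image.mpr ⟨m, Finset.mem_range.mpr (by omega), hn_eq.symm⟩)
      rw [hn_eq, hterm m, cc_neg (by omega : q - (m:ℤ) < 0), mul_zero, smul_zero]
    · push_neg at hsub
      obtain ⟨x, hx, hxne⟩ := hsub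
      have : roCoeff {((1:ℕ),(2:ℕ))} {((1:ℕ),(2:ℕ))} n = 0 := by
        rw [roCoeff]
        refine Finset.prod_eq_zero hx ?_
        rw [pairCoeff, if_neg (by simpa using hxne), if_neg (by simpa using hxne)]
      rw [this, zero_smul]
  rw [applyRO, finsum_eq_sum_of_support_subset _ hsupp, hs,
    Finset.sum_image (fun a _ b _ h => Finsupp.single_injective _ h)]
  refine Finset.sum_congr rfl fun m hm => ?_
  rw [roCoeff_single, hterm m]

end Red
section Comb

lemma negpow_even_diff {a b c : ℕ} (h : a + b = 2*c) : ((-1:P))^a = (-1)^b := by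
  have h1 : ((-1:P))^(a+b) = 1 := by rw [h, pow_mul]; norm_num
  have h2 : ((-1:P))^b * (-1)^b = 1 := by
    rw [← pow_add, show b + b = 2*b by ring, pow_mul]; norm_num
  calc ((-1:P))^a = (-1)^a * ((-1)^b * (-1)^b) := by rw [h2, mul_one]
    _ = ((-1)^(a+b)) * (-1)^b := by rw [pow_add]; ring
    _ = (-1)^b := by rw [h1, one_mul]

lemma hsplit (M : ℕ) (x : ℕ → P) :
    ∑ m ∈ Finset.range (M+1), (if m = 0 then (1:P) else 2*(-1)^m) * x m
      = (∑ m ∈ Finset.range (M+1), 2*(-1)^m * x m) - x 0 := by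
  have hc : ∀ m ∈ Finset.range (M+1),
      (if m = 0 then (1:P) else 2*(-1)^m) * x m
        = 2*(-1)^m * x m - (if m = 0 then x m else 0) := by
    intro m _
    by_cases hm : m = 0
    · subst hm; simp; ring
    · simp [hm]
  rw [Finset.sum_congr rfl hc, Finset.sum_sub_distrib]
  congr 1
  rw [Finset.sum_ite_eq' (Finset.range (M+1)) 0 x,
    if_pos (Finset.mem_range.mpr (by omega))]

lemma combine (k da db P' Q' : ℕ) (hP : P' = k+1+da) (hQ : Q' = k+1+db) :
    (∑ m ∈ Finset.range (Q'+1), ((if m = 0 then 1 else 2*(-1)^m : ℤ)) •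
        (cc (-(da:ℤ)) ((P':ℤ) + m) * cc (-(db:ℤ)) ((Q':ℤ) - m)))
    + (∑ m ∈ Finset.range (P'+1), ((if m = 0 then 1 else 2*(-1)^m : ℤ)) •
        (cc (-(db:ℤ)) ((Q':ℤ) + m) * cc (-(da:ℤ)) ((P':ℤ) - m))) ∈ Ik k := by
  set N : ℕ := da + db + 2*k + 2 with hN
  have hPQ : P' + Q' = N := by omega
  set g : ℕ → P := fun n => cc (-(da:ℤ)) n * cc (-(db:ℤ)) ((N:ℤ) - n) with hg
  set h : ℕ → P := fun n => 2 * (-1)^(P'+n) * g n with hh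
  have hterm1 : ∀ m : ℕ, cc (-(da:ℤ)) ((P':ℤ) + m) * cc (-(db:ℤ)) ((Q':ℤ) - m) = g (P'+m) := by
    intro m
    simp only [hg]
    rw [show ((P'+m : ℕ):ℤ) = (P':ℤ) + m by push_cast; ring,
        show (N:ℤ) - ((P':ℤ) + m) = (Q':ℤ) - m by omega]
  have hterm2 : ∀ m : ℕ, m ≤ P' →
      cc (-(db:ℤ)) ((Q':ℤ) + m) * cc (-(da:ℤ)) ((P':ℤ) - m) = g (P'-m) := by
    intro m hm
    simp only [hg]
    rw [show ((P'-m : ℕ):ℤ) = (P':ℤ) - m by omega,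
        show (N:ℤ) - ((P':ℤ) - m) = (Q':ℤ) + m by omega]
    ring
  -- convert smul to mul and rewrite terms
  have e1 : (∑ m ∈ Finset.range (Q'+1), ((if m = 0 then 1 else 2*(-1)^m : ℤ)) •
        (cc (-(da:ℤ)) ((P':ℤ) + m) * cc (-(db:ℤ)) ((Q':ℤ) - m)))
      = (∑ m ∈ Finset.range (Q'+1), 2*(-1:P)^m * g (P'+m)) - g (P'+0) := by
    rw [← hsplit]
    refine Finset.sum_congr rfl fun m hm => ?_
    rw [hterm1 m, zsmul_eq_mul]
    by_cases hm0 : m = 0 <;> simp [hm0]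
  have e2 : (∑ m ∈ Finset.range (P'+1), ((if m = 0 then 1 else 2*(-1)^m : ℤ)) •
        (cc (-(db:ℤ)) ((Q':ℤ) + m) * cc (-(da:ℤ)) ((P':ℤ) - m)))
      = (∑ m ∈ Finset.range (P'+1), 2*(-1:P)^m * g (P'-m)) - g (P'-0) := by
    rw [← hsplit]
    refine Finset.sum_congr rfl fun m hm => ?_
    have hmP : m ≤ P' := by
      have := Finset.mem_range.mp hm; omega
    rw [hterm2 m hmP, zsmul_eq_mul]
    by_cases hm0 : m = 0 <;> simp [hm0]
  have e3 : ∑ m ∈ Finset.range (Q'+1), 2*(-1:P)^m * g (P'+m)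
      = ∑ n ∈ Finset.Ico P' (N+1), h n := by
    rw [Finset.sum_Ico_eq_sum_range, show N+1-P' = Q'+1 by omega]
    refine Finset.sum_congr rfl fun i _ => ?_
    simp only [hh]
    rw [negpow_even_diff (show (P'+(P'+i)) + i = 2*(P'+i) by ring)]
  have e4 : ∑ m ∈ Finset.range (P'+1), 2*(-1:P)^m * g (P'-m)
      = ∑ n ∈ Finset.range (P'+1), h n := by
    have hrefl := Finset.sum_range_reflect h (P'+1)
    rw [← hrefl]
    refine Finset.sum_congr rfl fun m hm => ?_
    have hmP : m ≤ P' := by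
      have := Finset.mem_range.mp hm; omega
    rw [show P'+1-1-m = P'-m by omega]
    simp only [hh]
    rw [negpow_even_diff (show (P'+(P'-m)) + m = 2*P' by omega)]
  have e5 : ∑ n ∈ Finset.Ico P' (N+1), h n
      = h P' + ∑ n ∈ Finset.Ico (P'+1) (N+1), h n :=
    Finset.sum_eq_sum_Ico_succ_bot (by omega) h
  have e6 : ∑ n ∈ Finset.range (P'+1), h n + ∑ n ∈ Finset.Ico (P'+1) (N+1), h n
      = ∑ n ∈ Finset.range (N+1), h n := by
    simp only [Finset.range_eq_Ico]
    exact Finset.sum_Ico_consecutive h (by omega) (by omega)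
  have e7 : h P' = 2 * g P' := by
    simp only [hh]
    rw [negpow_even_diff (show (P'+P') + 0 = 2*P' by ring), pow_zero, mul_one]
  have etot : (∑ m ∈ Finset.range (Q'+1), ((if m = 0 then 1 else 2*(-1)^m : ℤ)) •
        (cc (-(da:ℤ)) ((P':ℤ) + m) * cc (-(db:ℤ)) ((Q':ℤ) - m)))
      + (∑ m ∈ Finset.range (P'+1), ((if m = 0 then 1 else 2*(-1)^m : ℤ)) •
        (cc (-(db:ℤ)) ((Q':ℤ) + m) * cc (-(da:ℤ)) ((P':ℤ) - m)))
      = ∑ n ∈ Finset.range (N+1), h n := by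
    rw [e1, e2, e3, e4, e5, ← e6, e7]
    rw [show P'+0 = P' by omega, show P'-0 = P' by omega]
    ring
  rw [etot]
  have e8 : ∑ n ∈ Finset.range (N+1), h n
      = (2 * (-1:P)^P') * ∑ n ∈ Finset.range (N+1), (-1)^n * g n := by
    rw [Finset.mul_sum]
    refine Finset.sum_congr rfl fun n _ => ?_
    simp only [hh]
    rw [pow_add]; ring
  rw [e8]
  refine Ideal.mul_mem_left _ _ ?_
  have hkey := key_mem k da db
  rw [show da+db+2*k+2 = N from rfl] at hkey
  simpa only [hg] using hkey

end Comb
theorem stmt4 (k : ℕ) (p q : ℤ) (hp : (k : ℤ) < p) (hq : (k : ℤ) < q) :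
    Ideal.Quotient.mk (Ik k)
        (applyRO {(1, 2)} {(1, 2)} (twoSet zeroSeq 1 ((k:ℤ)+1-p) ((k:ℤ)+1-q)) (twoSet zeroSeq 1 p q)) =
      - Ideal.Quotient.mk (Ik k)
        (applyRO {(1, 2)} {(1, 2)} (twoSet zeroSeq 1 ((k:ℤ)+1-q) ((k:ℤ)+1-p)) (twoSet zeroSeq 1 q p)) := by
  rw [eq_neg_iff_add_eq_zero, ← map_add, Ideal.Quotient.eq_zero_iff_mem]
  rw [applyRO_pair _ p q (by omega), applyRO_pair _ q p (by omega)]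
  have hb1 : twoSet zeroSeq 1 ((k:ℤ)+1-p) ((k:ℤ)+1-q) 1 = (k:ℤ)+1-p := rfl
  have hb2 : twoSet zeroSeq 1 ((k:ℤ)+1-p) ((k:ℤ)+1-q) 2 = (k:ℤ)+1-q := rfl
  have hb3 : twoSet zeroSeq 1 ((k:ℤ)+1-q) ((k:ℤ)+1-p) 1 = (k:ℤ)+1-q := rfl
  have hb4 : twoSet zeroSeq 1 ((k:ℤ)+1-q) ((k:ℤ)+1-p) 2 = (k:ℤ)+1-p := rfl
  rw [hb1, hb2, hb3, hb4]
  set P' : ℕ := p.toNat with hP'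
  set Q' : ℕ := q.toNat with hQ'
  set da : ℕ := P' - (k+1) with hda
  set db : ℕ := Q' - (k+1) with hdb
  have hPp : (P' : ℤ) = p := Int.toNat_of_nonneg (by omega)
  have hQq : (Q' : ℤ) = q := Int.toNat_of_nonneg (by omega)
  have ha : (k:ℤ)+1-p = -(da:ℤ) := by omega
  have hbq : (k:ℤ)+1-q = -(db:ℤ) := by omega
  rw [ha, hbq, ← hPp, ← hQq]
  exact combine k da db P' Q' (by omega) (by omega)
end
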